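/- (Key claim in the proof of Proposition 1(7)) For any machines j, k with j ≠ k, any location x ∈ Loc_k, any value v, and any configurations γ_1, γ_2, γ_3, γ_4: if γ_1 →^{LStore_j(x,v)} γ_2, γ_3 is reachable from γ_2 by a (possibly empty) finite sequence consisting solely of silent τ-steps (internal propagation steps), and γ_3 →^{LFlush_j(x)} γ_4, then γ_1 ⇒^{RStore_j(x,v)} γ_4, i.e., γ_4 is reachable from γ_1 by a transition sequence consisting of RStore_j(x,v) possibly interleaved with silent τ-steps. -/

import Mathlib

/-!  The CXL0 model.

We fix an abstract type `Machine` of machines, a type `Loc` of shared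
locations, and a type `Val` of values with a distinguished value `z`
(playing the role of the value `0`).  The partition of `Loc` into the
pairwise disjoint sets `Loc_1, …, Loc_N` is encoded by an ownership map
`owner : Loc → Machine` (so `x ∈ Loc_k` iff `owner x = k`).  Volatility of
each machine's memory is given by `vol : Machine → Bool` (`vol i = true`
means machine `i`'s memory is volatile).

A configuration `γ = (Cache, Mem)` is modeled by total maps
`cache : Machine → Loc → Option Val` (with `none` playing the role of `⊥`)
and `mem : Machine → Loc → Val` (the entries of `mem i` at locations not
owned by `i` are irrelevant; the transitions never consult them). -/

/-- Transition labels of the CXL0 labeled transition system. -/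
inductive CXLLabel (Machine Loc Val : Type) : Type where
  | LStore (i : Machine) (x : Loc) (v : Val)
  | RStore (i : Machine) (x : Loc) (v : Val)
  | MStore (i : Machine) (x : Loc) (v : Val)
  | Load   (i : Machine) (x : Loc) (v : Val)
  | LFlush (i : Machine) (x : Loc)
  | RFlush (i : Machine) (x : Loc)
  | GPF    (i : Machine)
  | Crash  (i : Machine)
  | tau

/-- Configurations of the CXL0 model. -/
structure CXLConfig (Machine Loc Val : Type) : Type where
  cache : Machine → Loc → Option Val
  mem   : Machine → Loc → Val

variable {Machine Loc Val : Type} [DecidableEq Machine] [DecidableEq Loc]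

/-- Single labeled transition of the CXL0 model. -/
inductive CXLStep (owner : Loc → Machine) (vol : Machine → Bool) (z : Val) :
    CXLConfig Machine Loc Val → CXLLabel Machine Loc Val →
      CXLConfig Machine Loc Val → Prop where
  | lstore (γ : CXLConfig Machine Loc Val) (i : Machine) (x : Loc) (v : Val) :
      CXLStep owner vol z γ (.LStore i x v)
        ⟨fun j y => if y = x then (if j = i then some v else none) else γ.cache j y,
         γ.mem⟩
  | rstore (γ : CXLConfig Machine Loc Val) (i : Machine) (x : Loc) (v : Val) :
      CXLStep owner vol z γ (.RStore i x v)
        ⟨fun j y => if y = x then (if j = owner x then some v else none) else γ.cache j y,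
         γ.mem⟩
  | mstore (γ : CXLConfig Machine Loc Val) (i : Machine) (x : Loc) (v : Val) :
      CXLStep owner vol z γ (.MStore i x v)
        ⟨fun j y => if y = x then none else γ.cache j y,
         fun j y => if j = owner x ∧ y = x then v else γ.mem j y⟩
  | load_cache (γ : CXLConfig Machine Loc Val) (i j : Machine) (x : Loc) (v : Val)
      (h : γ.cache j x = some v) :
      CXLStep owner vol z γ (.Load i x v)
        ⟨fun j' y => if j' = i ∧ y = x then some v else γ.cache j' y, γ.mem⟩
  | load_mem (γ : CXLConfig Machine Loc Val) (i : Machine) (x : Loc) (v : Val)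
      (h : ∀ j, γ.cache j x = none) (hm : γ.mem (owner x) x = v) :
      CXLStep owner vol z γ (.Load i x v) γ
  | lflush (γ : CXLConfig Machine Loc Val) (i : Machine) (x : Loc)
      (h : γ.cache i x = none) :
      CXLStep owner vol z γ (.LFlush i x) γ
  | rflush (γ : CXLConfig Machine Loc Val) (i : Machine) (x : Loc)
      (h : ∀ j, γ.cache j x = none) :
      CXLStep owner vol z γ (.RFlush i x) γ
  | gpf (γ : CXLConfig Machine Loc Val) (i : Machine)
      (h : ∀ j y, γ.cache j y = none) :
      CXLStep owner vol z γ (.GPF i) γ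
  | prop_cache_cache (γ : CXLConfig Machine Loc Val) (i : Machine) (x : Loc) (v : Val)
      (hik : i ≠ owner x) (h : γ.cache i x = some v) :
      CXLStep owner vol z γ .tau
        ⟨fun j y => if y = x then
            (if j = owner x then some v else if j = i then none else γ.cache j y)
          else γ.cache j y,
         γ.mem⟩
  | prop_cache_mem (γ : CXLConfig Machine Loc Val) (x : Loc) (v : Val)
      (h : γ.cache (owner x) x = some v) :
      CXLStep owner vol z γ .tau
        ⟨fun j y => if y = x then none else γ.cache j y,
         fun j y => if j = owner x ∧ y = x then v else γ.mem j y⟩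
  | crash (γ : CXLConfig Machine Loc Val) (i : Machine) :
      CXLStep owner vol z γ (.Crash i)
        ⟨fun j y => if j = i then none else γ.cache j y,
         fun j y => if j = i ∧ vol i then z else γ.mem j y⟩

/-- `CXLTrace owner vol z γ ls γ'` : `γ'` is reachable from `γ` by a sequence of
transitions labeled by the elements of `ls`, in this order, possibly interleaved
with additional silent `τ`-steps (this is the `γ ⇒^{α_1⋯α_n} γ'` relation). -/
inductive CXLTrace (owner : Loc → Machine) (vol : Machine → Bool) (z : Val) :
    CXLConfig Machine Loc Val → List (CXLLabel Machine Loc Val) →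
      CXLConfig Machine Loc Val → Prop where
  | nil (γ : CXLConfig Machine Loc Val) : CXLTrace owner vol z γ [] γ
  | tau {γ γ' γ'' : CXLConfig Machine Loc Val} {ls : List (CXLLabel Machine Loc Val)}
      (h : CXLStep owner vol z γ .tau γ') (ht : CXLTrace owner vol z γ' ls γ'') :
      CXLTrace owner vol z γ ls γ''
  | cons {γ γ' γ'' : CXLConfig Machine Loc Val} {l : CXLLabel Machine Loc Val}
      {ls : List (CXLLabel Machine Loc Val)}
      (h : CXLStep owner vol z γ l γ') (ht : CXLTrace owner vol z γ' ls γ'') :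
      CXLTrace owner vol z γ (l :: ls) γ''

/-- Reachability by a (possibly empty) finite sequence of silent `τ`-steps. -/
def CXLTauSteps (owner : Loc → Machine) (vol : Machine → Bool) (z : Val) :
    CXLConfig Machine Loc Val → CXLConfig Machine Loc Val → Prop :=
  Relation.ReflTransGen (fun a b => CXLStep owner vol z a .tau b)

/-- The initial configuration `γ_0`: all caches empty, all memories `0`. -/
def CXLInit (Machine Loc : Type) (z : Val) : CXLConfig Machine Loc Val :=
  ⟨fun _ _ => none, fun _ _ => z⟩


private def remapC (owner : Loc → Machine) (x : Loc) (v : Val)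
    (γ : CXLConfig Machine Loc Val) : CXLConfig Machine Loc Val :=
  ⟨fun i y => if y = x then (if i = owner x then some v else none) else γ.cache i y, γ.mem⟩

private lemma taus_to_trace {owner : Loc → Machine} {vol : Machine → Bool} {z : Val}
    {a b : CXLConfig Machine Loc Val} (h : CXLTauSteps owner vol z a b) :
    CXLTrace owner vol z a [] b := by
  induction h using Relation.ReflTransGen.head_induction_on with
  | refl => exact .nil _
  | head hs _ ih => exact .tau hs ih

private lemma key_sim {owner : Loc → Machine} {vol : Machine → Bool} {z : Val}
    {j : Machine} {x : Loc} {v : Val} (hjo : j ≠ owner x)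
    {γ3 : CXLConfig Machine Loc Val} {γ : CXLConfig Machine Loc Val}
    (h : CXLTauSteps owner vol z γ γ3) :
    γ.cache j x = some v → (∀ i, i ≠ j → γ.cache i x = none) →
    CXLTauSteps owner vol z (remapC owner x v γ) γ3 ∨ γ3.cache j x = some v := by
  induction h using Relation.ReflTransGen.head_induction_on with
  | refl => exact fun hj _ => Or.inr hj
  | head hs ht ih =>
    intro hj hother
    cases hs with
    | prop_cache_cache i2 y2 w2 hik hc =>
      rename_i δ
      by_cases hy : y2 = x
      · subst y2
        have hi : j = i2 := by
          by_contra hij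
          rw [hother i2 (fun e => hij e.symm)] at hc; exact Option.some_ne_none _ hc.symm
        subst hi
        have hw : v = w2 := by rw [hj] at hc; exact Option.some.inj hc
        subst hw
        refine Or.inl ?_
        have heq : remapC owner x v δ =
            ⟨fun j' y' => if y' = x then
                (if j' = owner x then some v else if j' = j then none else δ.cache j' y')
              else δ.cache j' y', δ.mem⟩ := by
          refine congrArg₂ CXLConfig.mk ?_ rfl
          funext i' y'
          by_cases h1 : y' = x <;> simp [remapC, h1]
          by_cases h2 : i' = owner x <;> simp [h2]
          by_cases h3 : i' = j
          · simp [h3]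
          · simp [h3, hother i' h3]
        rwa [heq]
      · rcases ih (by simpa [hy, Ne.symm hy] using hj)
            (fun i' hi' => by simpa [hy, Ne.symm hy] using hother i' hi') with h | h
        · refine Or.inl (Relation.ReflTransGen.head ?_ h)
          have step := CXLStep.prop_cache_cache (owner := owner) (vol := vol) (z := z)
            (remapC owner x v δ) i2 y2 w2 hik (by simpa [remapC, hy] using hc)
          have heq : (⟨fun j' y' => if y' = y2 then
                (if j' = owner y2 then some w2 else if j' = i2 then none
                  else (remapC owner x v δ).cache j' y')
              else (remapC owner x v δ).cache j' y', (remapC owner x v δ).mem⟩ :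
              CXLConfig Machine Loc Val) = remapC owner x v
              ⟨fun j' y' => if y' = y2 then
                  (if j' = owner y2 then some w2 else if j' = i2 then none else δ.cache j' y')
                else δ.cache j' y', δ.mem⟩ := by
            refine congrArg₂ CXLConfig.mk ?_ rfl
            funext i' y'
            by_cases h1 : y' = x
            · simp [remapC, h1, hy, Ne.symm hy]
            · by_cases h2 : y' = y2 <;> simp [remapC, h1, h2, hy]
          rwa [heq] at step
        · exact Or.inr h
    | prop_cache_mem y2 w2 hc =>
      rename_i δ
      by_cases hy : y2 = x
      · subst y2
        rw [hother (owner x) (Ne.symm hjo)] at hc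
        exact absurd hc.symm (Option.some_ne_none _)
      · rcases ih (by simpa [hy, Ne.symm hy] using hj)
            (fun i' hi' => by simpa [hy, Ne.symm hy] using hother i' hi') with h | h
        · refine Or.inl (Relation.ReflTransGen.head ?_ h)
          have step := CXLStep.prop_cache_mem (owner := owner) (vol := vol) (z := z)
            (remapC owner x v δ) y2 w2 (by simpa [remapC, hy] using hc)
          have heq : (⟨fun j' y' => if y' = y2 then none else (remapC owner x v δ).cache j' y',
              fun j' y' => if j' = owner y2 ∧ y' = y2 then w2
                else (remapC owner x v δ).mem j' y'⟩ :
              CXLConfig Machine Loc Val) = remapC owner x v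
              ⟨fun j' y' => if y' = y2 then none else δ.cache j' y',
               fun j' y' => if j' = owner y2 ∧ y' = y2 then w2 else δ.mem j' y'⟩ := by
            refine congrArg₂ CXLConfig.mk ?_ rfl
            funext i' y'
            by_cases h1 : y' = x
            · simp [remapC, h1, hy, Ne.symm hy]
            · by_cases h2 : y' = y2 <;> simp [remapC, h1, h2, hy]
          rwa [heq] at step
        · exact Or.inr h

/-- Key claim in the proof of Proposition 1(7): an `LStore` by a non-owner,
followed by internal propagation steps and an `LFlush`, is simulated by an
`RStore` (up to `τ`-steps). -/
theorem lstore_taus_lflush_simulated_by_rstore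
    (owner : Loc → Machine) (vol : Machine → Bool) (z : Val)
    (j k : Machine) (hjk : j ≠ k) (x : Loc) (hx : owner x = k) (v : Val)
    (γ₁ γ₂ γ₃ γ₄ : CXLConfig Machine Loc Val)
    (h1 : CXLStep owner vol z γ₁ (.LStore j x v) γ₂)
    (h2 : CXLTauSteps owner vol z γ₂ γ₃)
    (h3 : CXLStep owner vol z γ₃ (.LFlush j x) γ₄) :
    CXLTrace owner vol z γ₁ [.RStore j x v] γ₄ := by
  have hjo : j ≠ owner x := by rw [hx]; exact hjk
  cases h1
  cases h3
  rename_i hnone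
  have hj : (⟨fun j' y => if y = x then (if j' = j then some v else none)
        else γ₁.cache j' y, γ₁.mem⟩ :
      CXLConfig Machine Loc Val).cache j x = some v := by simp
  have hother : ∀ i, i ≠ j → (⟨fun j' y => if y = x then (if j' = j then some v else none)
        else γ₁.cache j' y, γ₁.mem⟩ :
      CXLConfig Machine Loc Val).cache i x = none := by
    intro i hi; simp [hi]
  rcases key_sim hjo h2 hj hother with h | h
  · have hre : remapC owner x v (⟨fun j' y => if y = x then (if j' = j then some v else none)
          else γ₁.cache j' y, γ₁.mem⟩ : CXLConfig Machine Loc Val) =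
        ⟨fun j' y => if y = x then (if j' = owner x then some v else none)
          else γ₁.cache j' y, γ₁.mem⟩ := by
      refine congrArg₂ CXLConfig.mk ?_ rfl
      funext i' y'
      by_cases h1 : y' = x <;> simp [remapC, h1]
    rw [hre] at h
    exact .cons (CXLStep.rstore γ₁ j x v) (taus_to_trace h)
  · rw [hnone] at h; exact absurd h.symm (Option.some_ne_none _)
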